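/- Let G be a connected graph, v an f-preferred vertex with terminal fort F_v, and suppose w ∈ F_v is also an f-preferred vertex (so v is p-preferred). Then {w} is a power dominating set of G. -/

import Mathlib

variable {V : Type*}

/-- Closed neighborhood of a set `A`: vertices in `A` or adjacent to a vertex of `A`
(the result of the domination step). -/
def closedNbhd (G : SimpleGraph V) (A : Set V) : Set V :=
  {w | ∃ v ∈ A, w = v ∨ G.Adj v w}

/-- One zero forcing step: an observed vertex `u` with exactly one unobserved neighbor `w`
forces `w`, enlarging the observed set `S` to `insert w S`. -/
def ForceStep (G : SimpleGraph V) (S T : Set V) : Prop :=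
  ∃ u w, u ∈ S ∧ w ∉ S ∧ G.Adj u w ∧ (∀ x, G.Adj u x → x ∉ S → x = w) ∧ T = insert w S

/-- `Observes G A O` : starting from the closed neighborhood of `A`, some sequence of
zero forcing steps yields observed set `O`. -/
def Observes (G : SimpleGraph V) (A O : Set V) : Prop :=
  Relation.ReflTransGen (ForceStep G) (closedNbhd G A) O

/-- No further zero forcing step applies from `O`. -/
def Stalled (G : SimpleGraph V) (O : Set V) : Prop := ∀ T, ¬ ForceStep G O T

/-- `A` is a power dominating set: the process observes every vertex. -/
def IsPDS (G : SimpleGraph V) (A : Set V) : Prop := Observes G A Set.univ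

/-- The power domination number: minimum size of a power dominating set. -/
noncomputable def pdn (G : SimpleGraph V) [Fintype V] : ℕ :=
  sInf {n | ∃ A : Finset V, IsPDS G (↑A : Set V) ∧ A.card = n}

/-- A fort: a nonempty set such that no outside vertex has exactly one neighbor in it. -/
def IsFort (G : SimpleGraph V) (F : Set V) : Prop :=
  F.Nonempty ∧ ∀ u ∉ F, ¬ ∃! w, w ∈ F ∧ G.Adj u w

/-- A terminal fort with cut vertex `v`: a fort whose only external neighbor is `v`. -/
def IsTerminalFort (G : SimpleGraph V) (v : V) (F : Set V) : Prop :=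
  IsFort G F ∧ v ∉ F ∧ ∀ u ∉ F, (∃ w ∈ F, G.Adj u w) → u = v

/-- `v` is f-preferred with terminal fort `F`: the process with input `{v}` observes all of `F`. -/
def FPreferred (G : SimpleGraph V) (v : V) (F : Set V) : Prop :=
  IsTerminalFort G v F ∧ ∃ O, Observes G {v} O ∧ F ⊆ O

/-- `v` is p-preferred: f-preferred with a terminal fort containing another f-preferred vertex. -/
def PPreferred (G : SimpleGraph V) (v : V) : Prop :=
  ∃ F, FPreferred G v F ∧ ∃ w ∈ F, w ≠ v ∧ ∃ F', FPreferred G w F'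

lemma mem_closedNbhd_singleton {G : SimpleGraph V} {a x : V} :
    x ∈ closedNbhd G {a} ↔ x = a ∨ G.Adj a x := by
  simp [closedNbhd]

lemma forceStep_subset {G : SimpleGraph V} {S T : Set V} (h : ForceStep G S T) : S ⊆ T := by
  obtain ⟨u, z, _, _, _, _, rfl⟩ := h
  exact Set.subset_insert _ _

lemma rtg_subset {G : SimpleGraph V} {S T : Set V}
    (h : Relation.ReflTransGen (ForceStep G) S T) : S ⊆ T := by
  induction h with
  | refl => exact le_refl _
  | tail _ hstep ih => exact ih.trans (forceStep_subset hstep)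

lemma rtg_diff_finite {G : SimpleGraph V} {S T : Set V}
    (h : Relation.ReflTransGen (ForceStep G) S T) : (T \ S).Finite := by
  induction h with
  | refl => simpa using Set.finite_empty
  | tail _ hstep ih =>
    obtain ⟨u, z, _, _, _, _, rfl⟩ := hstep
    refine (ih.insert z).subset ?_
    rintro x ⟨hx1, hx2⟩
    rcases Set.mem_insert_iff.mp hx1 with rfl | h'
    · exact Set.mem_insert _ _
    · exact Set.mem_insert_of_mem _ ⟨h', hx2⟩

lemma fort_disjoint {G : SimpleGraph V} {U S T : Set V} (hU : IsFort G U)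
    (hdis : ∀ x ∈ U, x ∉ S) (h : Relation.ReflTransGen (ForceStep G) S T) :
    ∀ x ∈ U, x ∉ T := by
  induction h with
  | refl => exact hdis
  | tail _ hstep ih =>
    obtain ⟨u, z, huS, hzS, hadj, huniq, rfl⟩ := hstep
    intro x hxU hxT
    rcases Set.mem_insert_iff.mp hxT with rfl | hxS
    · refine hU.2 u (fun huU => ih u huU huS) ⟨x, ⟨hxU, hadj⟩, ?_⟩
      rintro y ⟨hyU, hyadj⟩
      exact huniq y hyadj (ih y hyU)
    · exact ih x hxU hxS


lemma walk_avoid {G : SimpleGraph V} {v : V} {F : Set V}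
    (hterm : ∀ u ∉ F, (∃ y ∈ F, G.Adj u y) → u = v) (hvF : v ∉ F) :
    ∀ (x z : V), G.Walk x z → x ∉ F → z = v → ∃ q : G.Walk x v, ∀ y ∈ q.support, y ∉ F := by
  intro x z p
  induction p with
  | nil =>
    intro _ hz
    subst hz
    exact ⟨.nil, by simp [hvF]⟩
  | @cons a b c h p ih =>
    intro ha hz
    by_cases hb : b ∈ F
    · have hav : a = v := hterm a ha ⟨b, hb, h⟩
      subst hav
      exact ⟨.nil, by simp [hvF]⟩
    · obtain ⟨q, hq⟩ := ih hb hz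
      refine ⟨.cons h q, ?_⟩
      intro y hy
      rw [SimpleGraph.Walk.support_cons] at hy
      rcases List.mem_cons.mp hy with rfl | hy
      · exact ha
      · exact hq y hy

lemma walk_to_fort {G : SimpleGraph V} {w : V} {F F' : Set V}
    (hterm' : ∀ u ∉ F', (∃ y ∈ F', G.Adj u y) → u = w) (hwF : w ∈ F) :
    ∀ (x z : V) (q : G.Walk x z), (∀ y ∈ q.support, y ∉ F) → z ∈ F' → x ∈ F' := by
  intro x z q
  induction q with
  | nil => intro _ hz; exact hz
  | @cons a b c h p ih =>
    intro hsup hz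
    have hb : b ∈ F' := ih (fun y hy => hsup y (by
      rw [SimpleGraph.Walk.support_cons]; exact List.mem_cons_of_mem _ hy)) hz
    by_contra hxF'
    have haw := hterm' a hxF' ⟨b, hb, h⟩
    exact hsup a (by rw [SimpleGraph.Walk.support_cons]; exact List.mem_cons_self)
      (haw ▸ hwF)

lemma walk_from_fort {G : SimpleGraph V} {w : V} {F F' : Set V}
    (hterm' : ∀ u ∉ F', (∃ y ∈ F', G.Adj u y) → u = w) (hwF : w ∈ F) :
    ∀ (x z : V) (q : G.Walk x z), (∀ y ∈ q.support, y ∉ F) → x ∈ F' → z ∈ F' := by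
  intro x z q
  induction q with
  | nil => intro _ hx; exact hx
  | @cons a b c h p ih =>
    intro hsup hx
    have hb : b ∈ F' := by
      by_contra hbF'
      have hbw := hterm' b hbF' ⟨a, hx, h.symm⟩
      exact hsup b (by
        rw [SimpleGraph.Walk.support_cons]
        exact List.mem_cons_of_mem _ p.start_mem_support) (hbw ▸ hwF)
    exact ih (fun y hy => hsup y (by
      rw [SimpleGraph.Walk.support_cons]; exact List.mem_cons_of_mem _ hy)) hb

/-- If v is f-preferred with terminal fort F, and w ∈ F is also f-preferred, then {w} is a
power dominating set. -/
theorem stmt_15 {V : Type*} (G : SimpleGraph V) (hc : G.Connected) (v w : V) (F : Set V)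
    (hv : FPreferred G v F) (hw : w ∈ F) (hwf : ∃ F', FPreferred G w F') :
    IsPDS G {w} := by
  obtain ⟨⟨hFfort, hvF, hFterm⟩, O_v, hObsv, hFsub⟩ := hv
  obtain ⟨F', ⟨hF'fort, hwF', hF'term⟩, O', hObsw, hF'sub⟩ := hwf
  have hvw : v ≠ w := fun h => hvF (h ▸ hw)
  -- Step 1 : v ∈ F'
  have hvF' : v ∈ F' := by
    by_contra hvnF'
    have hF'F : F' ⊆ F := by
      intro x hx
      by_contra hxF
      obtain ⟨q, hq⟩ := walk_avoid hFterm hvF x v ((hc.preconnected x v).some) hxF rfl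
      exact hvnF' (walk_from_fort hF'term hw x v q hq hx)
    have hdis : ∀ x ∈ F', x ∉ closedNbhd G {v} := by
      intro x hx hmem
      rcases mem_closedNbhd_singleton.mp hmem with rfl | hadj
      · exact hvnF' hx
      · exact hvw (hF'term v hvnF' ⟨x, hx, hadj⟩)
    obtain ⟨x0, hx0⟩ := hF'fort.1
    exact fort_disjoint hF'fort hdis hObsv x0 hx0 (hFsub (hF'F hx0))
  -- Step 2 : everything outside F is in F'
  have hcompl : ∀ x, x ∉ F → x ∈ F' := by
    intro x hx
    obtain ⟨q, hq⟩ := walk_avoid hFterm hvF x v ((hc.preconnected x v).some) hx rfl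
    exact walk_to_fort hF'term hw x v q hq hvF'
  -- Step 3 : neighbors of v other than w are in F'
  have hnbr : ∀ x, G.Adj v x → x ≠ w → x ∈ F' := by
    intro x hadj hxw
    by_contra hxF'
    exact hxw (hF'term x hxF' ⟨v, hvF', hadj.symm⟩)
  have hO'clo : closedNbhd G {w} ⊆ O' := rtg_subset hObsw
  have hwO' : w ∈ O' := hO'clo (mem_closedNbhd_singleton.mpr (Or.inl rfl))
  have hKfin : (O_v \ closedNbhd G {v}).Finite := rtg_diff_finite hObsv
  have hcompl_F : ∀ S : Set V, O' ⊆ S → ∀ x, x ∉ S → x ∈ F := by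
    intro S hS x hx
    by_contra h
    exact hx (hS (hF'sub (hcompl x h)))
  have hcompl_clo : ∀ S : Set V, O' ⊆ S → ∀ x, x ∉ S → x ∉ closedNbhd G {v} := by
    intro S hS x hx hxc
    rcases mem_closedNbhd_singleton.mp hxc with rfl | hadj
    · exact hx (hS (hF'sub hvF'))
    · by_cases hxw : x = w
      · exact hx (hS (hxw ▸ hwO'))
      · exact hx (hS (hF'sub (hnbr x hadj hxw)))
  have hcompl_sub : ∀ S : Set V, O' ⊆ S → Sᶜ ⊆ O_v \ closedNbhd G {v} := by
    intro S hS x hx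
    exact ⟨hFsub (hcompl_F S hS x hx), hcompl_clo S hS x hx⟩
  -- the key stalling argument
  have hstall : ∀ S : Set V, O' ⊆ S → S ≠ Set.univ → ∃ T, ForceStep G S T := by
    intro S hS hne
    by_contra hstep
    push_neg at hstep
    have hSne : Sᶜ.Nonempty := by
      rcases Set.eq_empty_or_nonempty Sᶜ with h | h
      · exact absurd (Set.compl_empty_iff.mp h) hne
      · exact h
    obtain ⟨z0, hz0⟩ := hSne
    have hfort : IsFort G Sᶜ := by
      refine ⟨⟨z0, hz0⟩, ?_⟩
      intro u huU hexu
      obtain ⟨y, ⟨hyU, hyadj⟩, huniq⟩ := hexu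
      refine hstep (insert y S) ⟨u, y, not_not.mp huU, hyU, hyadj, ?_, rfl⟩
      intro x hx hxS
      exact huniq x ⟨hxS, hx⟩
    have hdis : ∀ x ∈ Sᶜ, x ∉ closedNbhd G {v} := fun x hx => hcompl_clo S hS x hx
    exact fort_disjoint hfort hdis hObsv z0 hz0 (hFsub (hcompl_F S hS z0 hz0))
  -- main induction on the (finite) number of unobserved vertices
  have main : ∀ (n : ℕ) (S : Set V), Observes G {w} S → O' ⊆ S → Sᶜ.ncard ≤ n →
      Observes G {w} Set.univ := by
    intro n
    induction n with
    | zero =>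
      intro S hObs hsub hcard
      have hfin : Sᶜ.Finite := hKfin.subset (hcompl_sub S hsub)
      have hemp : Sᶜ = ∅ := by
        rcases Set.eq_empty_or_nonempty Sᶜ with h | h
        · exact h
        · have := (Set.ncard_pos hfin).mpr h
          omega
      rwa [Set.compl_empty_iff.mp hemp] at hObs
    | succ n ih =>
      intro S hObs hsub hcard
      by_cases hne : S = Set.univ
      · rwa [hne] at hObs
      · obtain ⟨T, hT⟩ := hstall S hsub hne
        have hsubT : S ⊆ T := forceStep_subset hT
        obtain ⟨u, z, huS, hzS, hadj, huniq, rfl⟩ := hT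
        refine ih (insert z S) (hObs.tail ⟨u, z, huS, hzS, hadj, huniq, rfl⟩)
          (hsub.trans hsubT) ?_
        have hfin : Sᶜ.Finite := hKfin.subset (hcompl_sub S hsub)
        have hcompl_ins : (insert z S)ᶜ = Sᶜ \ {z} := by
          ext x
          simp [not_or, and_comm]
        rw [hcompl_ins]
        have hlt := Set.ncard_diff_singleton_lt_of_mem (show z ∈ Sᶜ from hzS) hfin
        omega
  exact main (Set.ncard O'ᶜ) O' hObsw (le_refl _) (le_refl _)
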